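/- Let G be a reductive group with maximal torus T_G and Weyl group W_G. There is a short exact sequence of lattices 0 → Bil^{s}(Λ(G^{ab})) → Bil^{s,D-ev}(Λ(T_G))^{W_G} → Bil^{s,ev}(Λ(T_{D(G)}) | Λ(T_{G^{ss}}))^{W_G} → 0, where the first map is pull-back along the projection Λ(T_G) ↠ Λ(G^{ab}) and the second map is restriction to Λ(T_{D(G)}). -/

import Mathlib

/-- `q : ℚ` is an integer. -/
def IsIntQ (q : ℚ) : Prop := ∃ m : ℤ, q = (m : ℚ)

lemma IsIntQ.add {a b : ℚ} (ha : IsIntQ a) (hb : IsIntQ b) : IsIntQ (a + b) := by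
  obtain ⟨m, rfl⟩ := ha; obtain ⟨n, rfl⟩ := hb; exact ⟨m + n, by push_cast; ring⟩

/-- The short exact sequence
`0 → Bil^s(Λ(G^{ab})) → Bil^{s,D-ev}(Λ(T_G))^{W_G} → Bil^{s,ev}(Λ(T_{D(G)})|Λ(T_{G^{ss}}))^{W_G} → 0`
for a reductive group `G`, encoded as follows.  `V = Λ(T_G)_ℚ` carries a linear action of
the finite Weyl group `W`, with `W`-equivariant projections `pab`, `pss` onto the abelian
and semisimple parts of the canonical splitting; `Λ ⊆ V` is the cocharacter lattice,
`Λ_D = Λ ∩ ker(pab)` and `Λ_ss = pss(Λ)`.  The first map is pull-back of forms along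
`pab` and the second is restriction of forms to the semisimple part; the claims are:
(i) pulled-back forms land in the middle group, (ii) the kernel of restriction equals the
image of pull-back, (iii) restrictions of middle forms are even on `Λ_D` and integral on
`Λ_D ⊗ Λ_ss`, and (iv) the restriction map is surjective onto the right-hand group. -/
theorem stmt6 (W V : Type*) [Group W] [Finite W]
    [AddCommGroup V] [Module ℚ V]
    [DistribMulAction W V] [SMulCommClass W ℚ V]
    (Λ : Submodule ℤ V) [Module.Free ℤ Λ] [Module.Finite ℤ Λ]
    (hspan : Submodule.span ℚ (Λ : Set V) = ⊤)
    (hΛW : ∀ (w : W), ∀ x ∈ Λ, w • x ∈ Λ)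
    (pab pss : V →ₗ[ℚ] V)
    (hsum : ∀ v, pab v + pss v = v)
    (hab2 : ∀ v, pab (pab v) = pab v)
    (habss : ∀ v, pab (pss v) = 0)
    (hssab : ∀ v, pss (pab v) = 0)
    (hWtriv : ∀ (w : W) (v : V), w • pab v = pab v)
    (hWeq : ∀ (w : W) (v : V), pss (w • v) = w • pss v)
    (hfix : ∀ v : V, (∀ w : W, w • v = v) → pss v = 0)
    (hcomm : ∀ x ∈ Λ, ∃ N : ℤ, N ≠ 0 ∧ N • pss x ∈ Λ) :
    -- (i) pull-backs of integral symmetric forms on Λ(G^{ab}) land in the middle group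
    (∀ b : V →ₗ[ℚ] V →ₗ[ℚ] ℚ,
      (∀ x y, b x y = b y x) → (∀ x y, b x y = b (pab x) (pab y)) →
      (∀ x ∈ Λ, ∀ y ∈ Λ, IsIntQ (b x y)) →
      ((∀ (w : W) (x y : V), b (w • x) (w • y) = b x y) ∧
        ∀ x ∈ Λ, pab x = 0 → ∃ m : ℤ, b x x = 2 * m)) ∧
    -- (ii) exactness in the middle: restriction vanishes iff the form is a pull-back
    (∀ b : V →ₗ[ℚ] V →ₗ[ℚ] ℚ,
      (∀ x y, b x y = b y x) →
      (∀ (w : W) (x y : V), b (w • x) (w • y) = b x y) →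
      (∀ x ∈ Λ, ∀ y ∈ Λ, IsIntQ (b x y)) →
      (∀ x ∈ Λ, pab x = 0 → ∃ m : ℤ, b x x = 2 * m) →
      ((∀ x y, b (pss x) (pss y) = 0) ↔ ∀ x y, b x y = b (pab x) (pab y))) ∧
    -- (iii) the restriction of a middle form is even on Λ_D and integral on Λ_D ⊗ Λ_ss
    (∀ b : V →ₗ[ℚ] V →ₗ[ℚ] ℚ,
      (∀ x y, b x y = b y x) →
      (∀ (w : W) (x y : V), b (w • x) (w • y) = b x y) →
      (∀ x ∈ Λ, ∀ y ∈ Λ, IsIntQ (b x y)) →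
      (∀ x ∈ Λ, pab x = 0 → ∃ m : ℤ, b x x = 2 * m) →
      ((∀ x ∈ Λ, pab x = 0 → ∀ y ∈ Λ, IsIntQ (b x (pss y))) ∧
        ∀ x ∈ Λ, pab x = 0 → ∃ m : ℤ, b (pss x) (pss x) = 2 * m)) ∧
    -- (iv) surjectivity of the restriction map
    (∀ c : V →ₗ[ℚ] V →ₗ[ℚ] ℚ,
      (∀ x y, c x y = c (pss x) (pss y)) →
      (∀ x y, c x y = c y x) →
      (∀ (w : W) (x y : V), c (w • x) (w • y) = c x y) →
      (∀ x ∈ Λ, pab x = 0 → ∀ y ∈ Λ, IsIntQ (c x (pss y))) →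
      (∀ x ∈ Λ, pab x = 0 → ∃ m : ℤ, c x x = 2 * m) →
      ∃ b : V →ₗ[ℚ] V →ₗ[ℚ] ℚ,
        (∀ x y, b x y = b y x) ∧
        (∀ (w : W) (x y : V), b (w • x) (w • y) = b x y) ∧
        (∀ x ∈ Λ, ∀ y ∈ Λ, IsIntQ (b x y)) ∧
        (∀ x ∈ Λ, pab x = 0 → ∃ m : ℤ, b x x = 2 * m) ∧
        ∀ x y, b (pss x) (pss y) = c x y) := by
  classical
  haveI := Fintype.ofFinite W
  -- basic projection facts
  have hpab_eq : ∀ v : V, pab v = v - pss v := fun v => eq_sub_iff_add_eq.mpr (hsum v)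
  have pss_of_ab0 : ∀ v : V, pab v = 0 → pss v = v := by
    intro v h
    have := hsum v; rw [h, zero_add] at this; exact this
  have pab_smul : ∀ (w : W) (v : V), pab (w • v) = pab v := by
    intro w v
    rw [hpab_eq, hWeq, ← smul_sub, ← hpab_eq, hWtriv]
  -- cross terms vanish for W-invariant symmetric forms
  have cross : ∀ b : V →ₗ[ℚ] V →ₗ[ℚ] ℚ, (∀ x y, b x y = b y x) →
      (∀ (w : W) (x y : V), b (w • x) (w • y) = b x y) →
      ∀ u v : V, b (pab u) (pss v) = 0 := by
    intro b hsym hW u v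
    have hinv : ∀ (w : W) (y : V), b (pab u) (w • y) = b (pab u) y := by
      intro w y
      conv_lhs => rw [← hWtriv w u]
      exact hW w (pab u) y
    have hs : ∀ w₀ : W, w₀ • (∑ w : W, w • v) = ∑ w : W, w • v := by
      intro w₀
      rw [Finset.smul_sum]
      exact Fintype.sum_equiv (Equiv.mulLeft w₀) _ _ (fun w => (mul_smul w₀ w v).symm)
    have hps : pss (∑ w : W, w • v) = 0 := hfix _ hs
    have hsum0 : ∑ w : W, b (pab u) (pss (w • v)) = 0 := by
      have h1 : ∑ w : W, b (pab u) (pss (w • v))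
          = b (pab u) (pss (∑ w : W, w • v)) := by
        rw [map_sum pss _ Finset.univ, map_sum]
      rw [h1, hps, map_zero]
    have hconst : ∀ w : W, b (pab u) (pss (w • v)) = b (pab u) (pss v) := by
      intro w; rw [hWeq, hinv]
    rw [Finset.sum_congr rfl (fun w _ => hconst w), Finset.sum_const,
      Finset.card_univ, nsmul_eq_mul] at hsum0
    have hcard : (Fintype.card W : ℚ) ≠ 0 := by
      exact_mod_cast Fintype.card_ne_zero
    exact (mul_eq_zero.mp hsum0).resolve_left hcard
  -- decomposition of a W-invariant symmetric form
  have decomp : ∀ b : V →ₗ[ℚ] V →ₗ[ℚ] ℚ, (∀ x y, b x y = b y x) →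
      (∀ (w : W) (x y : V), b (w • x) (w • y) = b x y) →
      ∀ x y, b x y = b (pab x) (pab y) + b (pss x) (pss y) := by
    intro b hsym hW x y
    conv_lhs => rw [← hsum x, ← hsum y]
    simp only [map_add, LinearMap.add_apply]
    rw [cross b hsym hW x y, hsym (pss x) (pab y), cross b hsym hW y x]
    ring
  refine ⟨?_, ?_, ?_, ?_⟩
  · -- (i)
    intro b hsym hfac hint
    constructor
    · intro w x y
      rw [hfac (w • x) (w • y), pab_smul, pab_smul, ← hfac x y]
    · intro x hx h0
      refine ⟨0, ?_⟩
      rw [hfac x x, h0]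
      simp
  · -- (ii)
    intro b hsym hW hint heven
    constructor
    · intro h x y
      rw [decomp b hsym hW x y, h, add_zero]
    · intro h x y
      rw [h (pss x) (pss y), habss, habss]
      simp
  · -- (iii)
    intro b hsym hW hint heven
    constructor
    · intro x hx h0 y hy
      have h1 : b x (pss y) = b x y := by
        have hd := decomp b hsym hW x y
        rw [h0, map_zero, LinearMap.zero_apply, zero_add, pss_of_ab0 x h0] at hd
        exact hd.symm
      rw [h1]; exact hint x hx y hy
    · intro x hx h0
      rw [pss_of_ab0 x h0]
      exact heven x hx h0
  · -- (iv)
    intro c hcfac hcsym hcW hcint hceven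
    have cint' : ∀ u ∈ Λ, pab u = 0 → ∀ t ∈ Λ, IsIntQ (c u t) := by
      intro u hu h0 t ht
      have h1 : c u t = c u (pss t) := by
        rw [hcfac u t, pss_of_ab0 u h0]
      rw [h1]; exact hcint u hu h0 t ht
    haveI : NoZeroSMulDivisors ℤ V := by
      constructor
      intro n v hnv
      rcases eq_or_ne n 0 with h | h
      · exact Or.inl h
      · right
        have h1 : (n : ℚ) • v = 0 := by rw [Int.cast_smul_eq_zsmul]; exact hnv
        have hn : (n : ℚ) ≠ 0 := by exact_mod_cast h
        exact (smul_eq_zero.mp h1).resolve_left hn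
    set pabZ : V →ₗ[ℤ] V := pab.restrictScalars ℤ with hpabZ
    set M : Submodule ℤ V := Λ.map pabZ with hMdef
    haveI : Module.Finite ℤ M := Module.Finite.map Λ pabZ
    haveI : Module.Free ℤ M := inferInstance
    set e : Module.Basis (Module.Free.ChooseBasisIndex ℤ M) ℤ M :=
      Module.Free.chooseBasis ℤ M with he
    set v : Module.Free.ChooseBasisIndex ℤ M → V := fun i => (e i : V) with hv
    have hvM : ∀ i, v i ∈ M := fun i => (e i).2
    have hliZ : LinearIndependent ℤ v :=
      e.linearIndependent.map' M.subtype (Submodule.ker_subtype M)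
    have hli : LinearIndependent ℚ v := (LinearIndependent.iff_fractionRing ℤ ℚ).mp hliZ
    set P : Submodule ℚ V := Submodule.span ℚ (Set.range v) with hPdef
    set B : Module.Basis (Module.Free.ChooseBasisIndex ℤ M) ℚ P := Module.Basis.span hli with hBdef
    have hmemM : ∀ x, x ∈ M → x ∈ P := by
      intro x hx
      have hxM : (⟨x, hx⟩ : M) = ∑ i, e.repr ⟨x, hx⟩ i • e i := (e.sum_repr _).symm
      have hxv : x = ∑ i, e.repr ⟨x, hx⟩ i • v i := by
        have h2 := congrArg (Subtype.val) hxM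
        simp only [Submodule.coe_sum, Submodule.coe_smul] at h2; exact h2
      rw [hxv]
      refine Submodule.sum_mem _ fun i _ => ?_
      rw [← Int.cast_smul_eq_zsmul ℚ]
      exact Submodule.smul_mem _ _ (Submodule.subset_span (Set.mem_range_self i))
    have hmempab : ∀ u : V, pab u ∈ P := by
      intro u
      have h1 : pab u ∈ Submodule.map pab (Submodule.span ℚ (Λ : Set V)) :=
        ⟨u, by rw [hspan]; trivial, rfl⟩
      rw [Submodule.map_span] at h1
      refine Submodule.span_le.mpr ?_ h1
      rintro _ ⟨x, hxΛ, rfl⟩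
      exact hmemM _ ⟨x, hxΛ, rfl⟩
    set π : V →ₗ[ℚ] P := pab.codRestrict P hmempab with hπdef
    set φ : Module.Free.ChooseBasisIndex ℤ M → (V →ₗ[ℚ] ℚ) :=
      fun i => (B.coord i).comp π with hφdef
    have hπ0 : ∀ u : V, pab u = 0 → π u = 0 := by
      intro u h
      apply Subtype.ext
      simp [hπdef, h]
    have hφ0 : ∀ u : V, pab u = 0 → ∀ i, φ i u = 0 := by
      intro u h i
      simp [hφdef, hπ0 u h]
    have hφss : ∀ (u : V) i, φ i (pss u) = 0 := fun u i => hφ0 _ (habss u) i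
    have hφW : ∀ (w : W) (u : V) i, φ i (w • u) = φ i u := by
      intro w u i
      have h1 : π (w • u) = π u := by
        apply Subtype.ext
        simp [hπdef, pab_smul]
      simp [hφdef, h1]
    have hBval : ∀ i, (B i : V) = v i := fun i => by
      rw [hBdef, Module.Basis.span_apply]
    have hcoord : ∀ x ∈ Λ, ∃ m : Module.Free.ChooseBasisIndex ℤ M → ℤ,
        (∀ i, φ i x = (m i : ℚ)) ∧ pab x = ∑ i, (m i : ℚ) • v i := by
      intro x hx
      have hxM : pab x ∈ M := Submodule.mem_map.mpr ⟨x, hx, rfl⟩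
      set m : Module.Free.ChooseBasisIndex ℤ M → ℤ := fun i => e.repr ⟨pab x, hxM⟩ i with hm
      have hsum2 : pab x = ∑ i, (m i : ℚ) • v i := by
        have h2 : (⟨pab x, hxM⟩ : M) = ∑ i, m i • e i := (e.sum_repr _).symm
        have h3 := congrArg (Subtype.val) h2
        have h4 : pab x = ∑ i, m i • v i := by simp only [Submodule.coe_sum, Submodule.coe_smul] at h3; exact h3
        rw [h4]
        exact Finset.sum_congr rfl fun i _ => (Int.cast_smul_eq_zsmul ℚ (m i) (v i)).symm
      refine ⟨m, ?_, hsum2⟩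
      intro i
      have hπx : π x = ∑ j, (m j : ℚ) • B j := by
        apply Subtype.ext
        have : ((∑ j, (m j : ℚ) • B j : P) : V) = ∑ j, (m j : ℚ) • (B j : V) := by
          simp
        rw [this]
        simp only [hBval]
        simpa [hπdef] using hsum2
      have h5 : φ i x = B.repr (π x) i := by
        simp [hφdef, Module.Basis.coord_apply]
      rw [h5, hπx, B.repr_sum_self]
    have hz : ∀ i, ∃ zz, zz ∈ Λ ∧ pab zz = v i := by
      intro i
      obtain ⟨zz, hzz, hzz2⟩ := Submodule.mem_map.mp (hvM i)
      exact ⟨zz, hzz, hzz2⟩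
    choose z hzΛ hzab using hz
    set A : V →ₗ[ℚ] V →ₗ[ℚ] ℚ :=
      ∑ i, ∑ j, c (z i) (z j) • (LinearMap.smulRight (φ i) (φ j)) with hAdef
    have hAapp : ∀ u t : V, A u t = ∑ i, ∑ j, c (z i) (z j) * (φ i u * φ j t) := by
      intro u t
      rw [hAdef]
      simp only [LinearMap.coe_sum, Finset.sum_apply, LinearMap.sum_apply,
        LinearMap.smul_apply, LinearMap.smulRight_apply, smul_eq_mul]
    refine ⟨c - A, ?_, ?_, ?_, ?_, ?_⟩
    · intro x y
      simp only [LinearMap.sub_apply]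
      rw [hcsym x y, hAapp, hAapp]
      congr 1
      rw [Finset.sum_comm]
      refine Finset.sum_congr rfl fun i _ => Finset.sum_congr rfl fun j _ => ?_
      rw [hcsym (z i) (z j)]; ring
    · intro w x y
      simp only [LinearMap.sub_apply]
      rw [hcW w x y, hAapp, hAapp]
      congr 1
      exact Finset.sum_congr rfl fun i _ => Finset.sum_congr rfl fun j _ => by
        rw [hφW, hφW]
    · intro x hx y hy
      obtain ⟨m, hm1, hm2⟩ := hcoord x hx
      obtain ⟨n, hn1, hn2⟩ := hcoord y hy
      set x' : V := ∑ i, (m i : ℚ) • z i with hx'def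
      set y' : V := ∑ i, (n i : ℚ) • z i with hy'def
      have hx'Λ : x' ∈ Λ := by
        refine Submodule.sum_mem _ fun i _ => ?_
        rw [Int.cast_smul_eq_zsmul]
        exact Submodule.smul_mem _ _ (hzΛ i)
      have hy'Λ : y' ∈ Λ := by
        refine Submodule.sum_mem _ fun i _ => ?_
        rw [Int.cast_smul_eq_zsmul]
        exact Submodule.smul_mem _ _ (hzΛ i)
      have hpabx' : pab x' = pab x := by
        rw [hx'def, map_sum]
        simp_rw [map_smul, hzab]
        exact hm2.symm
      have hpaby' : pab y' = pab y := by
        rw [hy'def, map_sum]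
        simp_rw [map_smul, hzab]
        exact hn2.symm
      have hAxy : A x y = c x' y' := by
        rw [hAapp]
        have h7a : ∀ t : V, c x' t = ∑ i, (m i : ℚ) * c (z i) t := by
          intro t
          rw [hx'def, map_sum, LinearMap.sum_apply]
          refine Finset.sum_congr rfl fun i _ => ?_
          rw [map_smul, LinearMap.smul_apply, smul_eq_mul]
        have h7b : ∀ i, c (z i) y' = ∑ j, (n j : ℚ) * c (z i) (z j) := by
          intro i
          rw [hy'def, map_sum]
          refine Finset.sum_congr rfl fun j _ => ?_
          rw [map_smul, smul_eq_mul]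
        have h7 : c x' y' = ∑ i, ∑ j, (m i : ℚ) * ((n j : ℚ) * c (z i) (z j)) := by
          rw [h7a y']
          refine Finset.sum_congr rfl fun i _ => ?_
          rw [h7b i, Finset.mul_sum]
        rw [h7]
        refine Finset.sum_congr rfl fun i _ => Finset.sum_congr rfl fun j _ => ?_
        rw [hm1 i, hn1 j]; ring
      have key : (c - A) x y = c (x - x') y + c x' (y - y') := by
        simp only [LinearMap.sub_apply, map_sub]
        rw [hAxy]
        ring
      rw [key]
      refine IsIntQ.add ?_ ?_
      · exact cint' (x - x') (Submodule.sub_mem _ hx hx'Λ)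
          (by rw [map_sub, hpabx', sub_self]) y hy
      · rw [hcsym x' (y - y')]
        exact cint' (y - y') (Submodule.sub_mem _ hy hy'Λ)
          (by rw [map_sub, hpaby', sub_self]) x' hx'Λ
    · intro x hx h0
      obtain ⟨mm, hmm⟩ := hceven x hx h0
      refine ⟨mm, ?_⟩
      have h8 : (c - A) x x = c x x := by
        simp only [LinearMap.sub_apply]
        rw [hAapp]
        simp [hφ0 x h0]
      rw [h8, hmm]
    · intro x y
      simp only [LinearMap.sub_apply]
      rw [hAapp]
      simp only [hφss, mul_zero, zero_mul, Finset.sum_const_zero, sub_zero]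
      exact (hcfac x y).symm
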